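/- Let p be a polynomial with non-negative integer coefficients summing to n ≥ 2, with at least two nonzero coefficients. If z = ir is a nonzero purely imaginary root of p (r real, r ≠ 0), then 1/√(n−1) ≤ |z| ≤ √(n−1). -/

import Mathlib

open Polynomial Complex Finset

lemma I_pow_mod' (i : ℕ) : Complex.I ^ i = Complex.I ^ (i % 4) := by
  conv_lhs => rw [← Nat.div_add_mod i 4, pow_add, pow_mul, Complex.I_pow_four, one_pow, one_mul]

lemma key_bound (p : Polynomial ℕ) (n : ℕ) (hn : 2 ≤ n)
    (hsum : p.eval 1 = n) (r : ℝ) (hr : 0 < r)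
    (hz : Polynomial.aeval ((r : ℂ) * Complex.I) p = 0) : r ^ 2 ≤ (n : ℝ) - 1 := by
  have hn2 : (2:ℝ) ≤ (n:ℝ) := by exact_mod_cast hn
  rcases le_or_gt r 1 with hr1 | hr1
  · nlinarith [hr.le]
  set d := p.natDegree with hd
  set f : ℕ → ℝ := fun i => (p.coeff i : ℝ) * r ^ i with hf
  have hfnn : ∀ i, 0 ≤ f i := fun i => mul_nonneg (Nat.cast_nonneg _) (pow_nonneg hr.le _)
  have hp0 : p ≠ 0 := by
    intro h; rw [h] at hsum; simp at hsum; omega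
  have had : 1 ≤ p.coeff d := by
    have h := Polynomial.leadingCoeff_ne_zero.mpr hp0
    rw [Polynomial.leadingCoeff, ← hd] at h
    omega
  have hA : ∑ i ∈ Finset.range (d + 1), p.coeff i = n := by
    rw [← hsum]
    rw [Polynomial.eval_eq_sum_range]
    simp
    rfl
  have hz' : ∑ i ∈ Finset.range (d + 1), (f i : ℂ) * Complex.I ^ (i % 4) = 0 := by
    rw [Polynomial.aeval_eq_sum_range] at hz
    rw [← hz]
    apply Finset.sum_congr rfl
    intro i _
    rw [mul_pow, ← I_pow_mod', nsmul_eq_mul]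
    push_cast [hf]
    ring
  have hre : ∑ i ∈ Finset.range (d + 1), f i * (Complex.I ^ (i % 4)).re = 0 := by
    have h := congrArg Complex.re hz'
    rw [Complex.re_sum] at h
    simpa [Complex.re_ofReal_mul] using h
  have him : ∑ i ∈ Finset.range (d + 1), f i * (Complex.I ^ (i % 4)).im = 0 := by
    have h := congrArg Complex.im hz'
    rw [Complex.im_sum] at h
    simpa [Complex.im_ofReal_mul] using h
  have hS02 : ∑ i ∈ (Finset.range (d+1)).filter (fun i => i % 4 = 0), f i
      = ∑ i ∈ (Finset.range (d+1)).filter (fun i => i % 4 = 2), f i := by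
    have heq : ∑ i ∈ Finset.range (d+1), ((if i % 4 = 0 then f i else 0) - (if i % 4 = 2 then f i else 0))
        = ∑ i ∈ Finset.range (d+1), f i * (Complex.I ^ (i % 4)).re := by
      apply Finset.sum_congr rfl
      intro i _
      rcases (by omega : i % 4 = 0 ∨ i % 4 = 1 ∨ i % 4 = 2 ∨ i % 4 = 3) with h | h | h | h <;>
        rw [h] <;> norm_num [pow_succ, Complex.I_sq]
    rw [Finset.sum_filter, Finset.sum_filter, ← sub_eq_zero, ← Finset.sum_sub_distrib, heq, hre]
  have hS13 : ∑ i ∈ (Finset.range (d+1)).filter (fun i => i % 4 = 1), f i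
      = ∑ i ∈ (Finset.range (d+1)).filter (fun i => i % 4 = 3), f i := by
    have heq : ∑ i ∈ Finset.range (d+1), ((if i % 4 = 1 then f i else 0) - (if i % 4 = 3 then f i else 0))
        = ∑ i ∈ Finset.range (d+1), f i * (Complex.I ^ (i % 4)).im := by
      apply Finset.sum_congr rfl
      intro i _
      rcases (by omega : i % 4 = 0 ∨ i % 4 = 1 ∨ i % 4 = 2 ∨ i % 4 = 3) with h | h | h | h <;>
        rw [h] <;> norm_num [pow_succ, Complex.I_sq]
    rw [Finset.sum_filter, Finset.sum_filter, ← sub_eq_zero, ← Finset.sum_sub_distrib, heq, him]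
  have hstep : f d ≤ ∑ i ∈ (Finset.range (d+1)).filter (fun i => i % 4 = (d % 4 + 2) % 4), f i := by
    have h1 : f d ≤ ∑ i ∈ (Finset.range (d+1)).filter (fun i => i % 4 = d % 4), f i := by
      apply Finset.single_le_sum (fun i _ => hfnn i)
      simp
    refine h1.trans_eq ?_
    rcases (by omega : d % 4 = 0 ∨ d % 4 = 1 ∨ d % 4 = 2 ∨ d % 4 = 3) with h | h | h | h <;>
      rw [h] <;> norm_num
    · exact hS02
    · exact hS13
    · exact hS02.symm
    · exact hS13.symm
  have hcoef : (∑ i ∈ (Finset.range (d+1)).filter (fun i => i % 4 = (d % 4 + 2) % 4), p.coeff i)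
      + p.coeff d ≤ n := by
    rw [← hA, ← Finset.sum_erase_add (Finset.range (d+1)) _ (by simp : d ∈ Finset.range (d+1))]
    gcongr ?_ + _
    apply Finset.sum_le_sum_of_subset
    intro i hi
    simp only [Finset.mem_filter, Finset.mem_range, Finset.mem_erase] at hi ⊢
    omega
  have hub : ∑ i ∈ (Finset.range (d+1)).filter (fun i => i % 4 = (d % 4 + 2) % 4), f i
      ≤ ((n : ℝ) - 1) * r ^ (d - 2) := by
    calc ∑ i ∈ (Finset.range (d+1)).filter (fun i => i % 4 = (d % 4 + 2) % 4), f i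
        ≤ ∑ i ∈ (Finset.range (d+1)).filter (fun i => i % 4 = (d % 4 + 2) % 4),
            (p.coeff i : ℝ) * r ^ (d - 2) := by
          apply Finset.sum_le_sum
          intro i hi
          simp only [Finset.mem_filter, Finset.mem_range] at hi
          have hile : i ≤ d - 2 := by omega
          exact mul_le_mul_of_nonneg_left (pow_le_pow_right₀ hr1.le hile) (Nat.cast_nonneg _)
      _ = (∑ i ∈ (Finset.range (d+1)).filter (fun i => i % 4 = (d % 4 + 2) % 4),
            (p.coeff i : ℝ)) * r ^ (d - 2) := by rw [Finset.sum_mul]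
      _ ≤ ((n : ℝ) - 1) * r ^ (d - 2) := by
          apply mul_le_mul_of_nonneg_right _ (pow_nonneg hr.le _)
          have : (∑ i ∈ (Finset.range (d+1)).filter (fun i => i % 4 = (d % 4 + 2) % 4),
              p.coeff i) + 1 ≤ n := le_trans (by omega) hcoef
          have h1 : ((∑ i ∈ (Finset.range (d+1)).filter (fun i => i % 4 = (d % 4 + 2) % 4), p.coeff i : ℕ) : ℝ) + 1 ≤ (n : ℝ) := by exact_mod_cast this
          push_cast at h1 ⊢
          linarith
  rcases le_or_gt d 1 with hd1 | hd2
  · exfalso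
    have hemp : (Finset.range (d+1)).filter (fun i => i % 4 = (d % 4 + 2) % 4) = ∅ := by
      apply Finset.filter_eq_empty_iff.mpr
      intro i hi
      simp only [Finset.mem_range] at hi
      omega
    rw [hemp, Finset.sum_empty] at hstep
    have : 0 < f d := mul_pos (by exact_mod_cast had) (pow_pos hr _)
    linarith
  · have hfd : r ^ d ≤ f d := by
      show r ^ d ≤ (p.coeff d : ℝ) * r ^ d
      have h1 : (1 : ℝ) ≤ (p.coeff d : ℝ) := by exact_mod_cast had
      simpa using mul_le_mul_of_nonneg_right h1 (pow_nonneg hr.le d)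
    have hkey : r ^ 2 * r ^ (d - 2) ≤ ((n : ℝ) - 1) * r ^ (d - 2) := by
      have : r ^ 2 * r ^ (d - 2) = r ^ d := by
        rw [← pow_add]; congr 1; omega
      rw [this]
      exact hfd.trans (hstep.trans hub)
    exact le_of_mul_le_mul_right hkey (pow_pos hr _)

lemma key_bound2 (p : Polynomial ℕ) (n : ℕ) (hn : 2 ≤ n)
    (hsum : p.eval 1 = n) (r : ℝ) (hr : r ≠ 0)
    (hz : Polynomial.aeval ((r : ℂ) * Complex.I) p = 0) : r ^ 2 ≤ (n : ℝ) - 1 := by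
  rcases hr.lt_or_gt with hneg | hpos
  · have hz2 : Polynomial.aeval (((-r : ℝ) : ℂ) * Complex.I) p = 0 := by
      have h := congrArg (starRingEnd ℂ) hz
      rw [Polynomial.aeval_def, Polynomial.hom_eval₂] at h
      rw [Polynomial.aeval_def]
      have hco : (starRingEnd ℂ).comp (algebraMap ℕ ℂ) = algebraMap ℕ ℂ :=
        Subsingleton.elim _ _
      rw [hco, map_zero] at h
      convert h using 2
      simp [map_mul, Complex.conj_I, Complex.conj_ofReal]
    have := key_bound p n hn hsum (-r) (by linarith) hz2
    nlinarith
  · exact key_bound p n hn hsum r hpos hz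

theorem imaginary_degree_root_bound (p : Polynomial ℕ) (n : ℕ) (hn : 2 ≤ n)
    (hsum : p.eval 1 = n) (hsupp : 2 ≤ p.support.card)
    (r : ℝ) (hr : r ≠ 0) (hz : Polynomial.aeval ((r : ℂ) * Complex.I) p = 0) :
    1 / Real.sqrt ((n : ℝ) - 1) ≤ ‖(r : ℂ) * Complex.I‖ ∧
      ‖(r : ℂ) * Complex.I‖ ≤ Real.sqrt ((n : ℝ) - 1) := by
  have habs : ‖(r : ℂ) * Complex.I‖ = |r| := by
    simp
  have h1 : r ^ 2 ≤ (n : ℝ) - 1 := key_bound2 p n hn hsum r hr hz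
  have hn1 : (0 : ℝ) < (n : ℝ) - 1 := by
    have : (2 : ℝ) ≤ (n : ℝ) := by exact_mod_cast hn
    linarith
  constructor
  · -- lower bound via reverse polynomial
    set q := p.reverse with hq
    have hq1 : q.eval 1 = n := by
      haveI := invertibleOne (α := ℕ)
      have h := Polynomial.eval₂_reverse_mul_pow (RingHom.id ℕ) (1 : ℕ) p
      rw [invOf_one, one_pow, mul_one, Polynomial.eval₂_at_one, Polynomial.eval₂_at_one] at h
      simpa [hsum] using h
    have hw : ((r : ℂ) * Complex.I) ≠ 0 := by
      simp [Complex.ext_iff, hr]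
    have : Invertible ((r : ℂ) * Complex.I) := invertibleOfNonzero hw
    have hqz : Polynomial.aeval (((-1 / r : ℝ) : ℂ) * Complex.I) q = 0 := by
      have h := (Polynomial.eval₂_reverse_eq_zero_iff (algebraMap ℕ ℂ)
        ((r : ℂ) * Complex.I) p).mpr (by rwa [Polynomial.aeval_def] at hz)
      rw [Polynomial.aeval_def]
      convert h using 2
      · rfl
      · rfl
      rw [invOf_eq_inv]
      rw [mul_inv, Complex.inv_I]
      push_cast
      field_simp
    have h2 : (-1 / r) ^ 2 ≤ (n : ℝ) - 1 :=
      key_bound2 q n hn hq1 (-1 / r) (by simp [hr]) hqz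
    have hr2 : (0 : ℝ) < r ^ 2 := by positivity
    have h3 : 1 / ((n : ℝ) - 1) ≤ r ^ 2 := by
      rw [div_le_iff₀ hn1]
      have : (-1 / r) ^ 2 = 1 / r ^ 2 := by
        field_simp
      rw [this] at h2
      rw [div_le_iff₀ hr2] at h2
      linarith
    rw [habs]
    rw [one_div, ← Real.sqrt_inv, ← Real.sqrt_sq_eq_abs]
    exact Real.sqrt_le_sqrt (by rw [← one_div]; exact h3)
  · rw [habs, ← Real.sqrt_sq_eq_abs]
    exact Real.sqrt_le_sqrt h1
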